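/- arXiv:2007.11643 — 3 statements merged into one kernel-verified Lean document; each statement's English description precedes it below -/
import Mathlib

section
/- If (G,k) is a yes-instance of Path Contraction with G having n vertices, then G has at most n - 1 + (k² + 5k + 4)/2 edges. -/
open SimpleGraph

variable {V : Type*}

/-- The setoid identifying vertices connected by edges of `C`. -/
def contractSetoid (C : Set (Sym2 V)) : Setoid V :=
  (SimpleGraph.fromEdgeSet C).reachableSetoid

/-- The graph obtained from `G` by contracting every edge in `C`
(merging endpoints, removing loops and parallel edges). -/
def contract (G : SimpleGraph V) (C : Set (Sym2 V)) :
    SimpleGraph (Quotient (contractSetoid C)) where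
  Adj a b := a ≠ b ∧ ∃ u v : V,
    Quotient.mk (contractSetoid C) u = a ∧ Quotient.mk (contractSetoid C) v = b ∧ G.Adj u v
  symm := by
    constructor
    rintro a b ⟨hab, u, v, hu, hv, h⟩
    exact ⟨hab.symm, v, u, hv, hu, h.symm⟩
  loopless := by constructor; rintro a ⟨h, -⟩; exact h rfl

/-- `H` is a simple path (path graph). -/
def IsPathGraph {W : Type*} (H : SimpleGraph W) : Prop :=
  ∃ n : ℕ, Nonempty (H ≃g SimpleGraph.pathGraph n)

/-- `C` is a solution of the Path Contraction instance `(G, k)`. -/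
def PCSolution (G : SimpleGraph V) (k : ℕ) (C : Finset (Sym2 V)) : Prop :=
  ↑C ⊆ G.edgeSet ∧ C.card ≤ k ∧ IsPathGraph (contract G ↑C)

/-- `(G, k)` is a yes-instance of Path Contraction. -/
def PCYes (G : SimpleGraph V) (k : ℕ) : Prop :=
  ∃ C : Finset (Sym2 V), PCSolution G k C

section AuxArith
open Finset

lemma arith_sq (e : ℕ → ℕ) (m : ℕ) :
    ∑ i ∈ range m, (e i)^2 + 2 * ∑ i ∈ range (m-1), e i * e (i+1)
      ≤ (∑ i ∈ range m, e i)^2 := by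
  induction m with
  | zero => simp
  | succ m ih =>
    rcases Nat.eq_zero_or_pos m with rfl | hm
    · simp [sq]
    · have hm1 : m = (m - 1) + 1 := (Nat.succ_pred_eq_of_pos hm).symm
      have hsplit : ∑ i ∈ range m, e i * e (i+1)
          = ∑ i ∈ range (m-1), e i * e (i+1) + e (m-1) * e m := by
        nth_rewrite 1 [hm1]
        rw [Finset.sum_range_succ, ← hm1]
      have hle : e (m-1) ≤ ∑ i ∈ range m, e i := by
        apply Finset.single_le_sum (f := e) (fun i _ => Nat.zero_le _)
        exact Finset.mem_range.mpr (by omega)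
      rw [Finset.sum_range_succ (f := fun i => (e i)^2),
        Finset.sum_range_succ (f := e), Nat.succ_sub_one, hsplit]
      nlinarith [ih]

lemma key_arith (m k : ℕ) (t : ℕ → ℕ) (ht1 : ∀ i < m, 1 ≤ t i)
    (hs : ∑ i ∈ range m, t i ≤ m + k) :
    ∑ i ∈ range m, (t i * t i - t i) + 2 * ∑ i ∈ range (m-1), t i * t (i+1)
      ≤ 2 * (∑ i ∈ range m, t i - 1) + (k^2 + 5*k + 4) := by
  rcases Nat.eq_zero_or_pos m with rfl | hm
  · simp only [Finset.range_zero, Finset.sum_empty, Nat.zero_sub, Nat.mul_zero]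
    nlinarith
  set e : ℕ → ℕ := fun i => t i - 1 with he
  have hte : ∀ i < m, t i = e i + 1 := fun i hi => by
    have := ht1 i hi; simp only [he]; omega
  set s : ℕ := ∑ i ∈ range m, e i with hsdef
  have hsum : ∑ i ∈ range m, t i = s + m := by
    have : ∑ i ∈ range m, t i = ∑ i ∈ range m, (e i + 1) :=
      Finset.sum_congr rfl (fun i hi => hte i (Finset.mem_range.mp hi))
    rw [this, Finset.sum_add_distrib]; simp [hsdef]
  have hsk : s ≤ k := by omega
  have h1 : ∑ i ∈ range m, (t i * t i - t i) = ∑ i ∈ range m, (e i ^ 2 + e i) := by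
    apply Finset.sum_congr rfl
    intro i hi
    rw [hte i (Finset.mem_range.mp hi)]; ring_nf; omega
  have h2 : ∑ i ∈ range (m-1), t i * t (i+1)
      = ∑ i ∈ range (m-1), (e i * e (i+1) + e i + e (i+1) + 1) := by
    apply Finset.sum_congr rfl
    intro i hi
    have hi' := Finset.mem_range.mp hi
    rw [hte i (by omega), hte (i+1) (by omega)]; ring
  have h3 : ∑ i ∈ range (m-1), e i ≤ s := by
    apply Finset.sum_le_sum_of_subset
    intro i hi; simp only [Finset.mem_range] at *; omega
  have h4 : ∑ i ∈ range (m-1), e (i+1) ≤ s := by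
    have : ∑ i ∈ Ico 1 m, e i = ∑ i ∈ range (m-1), e (i+1) := by
      rw [Finset.sum_Ico_eq_sum_range]
      exact Finset.sum_congr rfl (fun i _ => by rw [Nat.add_comm])
    rw [← this, hsdef, Finset.range_eq_Ico]
    apply Finset.sum_le_sum_of_subset
    apply Finset.Ico_subset_Ico <;> omega
  have hsq := arith_sq e m
  have hEE : ∑ i ∈ range m, (e i)^2 + 2 * ∑ i ∈ range (m-1), e i * e (i+1) ≤ s^2 := hsq
  have expand2 : ∑ i ∈ range (m-1), (e i * e (i+1) + e i + e (i+1) + 1)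
      = ∑ i ∈ range (m-1), e i * e (i+1) + ∑ i ∈ range (m-1), e i
        + ∑ i ∈ range (m-1), e (i+1) + (m-1) := by
    simp [Finset.sum_add_distrib]
  have expand1 : ∑ i ∈ range m, (e i ^2 + e i) = ∑ i ∈ range m, e i ^ 2 + s := by
    simp [Finset.sum_add_distrib, hsdef]
  rw [h1, h2, hsum, expand1, expand2]
  have : s^2 + 3*s ≤ k^2 + 5*k + 4 := by nlinarith
  omega

end AuxArith

lemma reach_insert {C : Set (Sym2 V)} {x y u v : V}
    (h : (fromEdgeSet (insert s(x,y) C)).Reachable u v) :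
    (fromEdgeSet C).Reachable u v ∨
    ((fromEdgeSet C).Reachable u x ∧ (fromEdgeSet C).Reachable y v) ∨
    ((fromEdgeSet C).Reachable u y ∧ (fromEdgeSet C).Reachable x v) := by
  obtain ⟨w⟩ := h
  induction w with
  | nil => exact Or.inl (Reachable.refl _)
  | @cons a b c hab w ih =>
    rw [fromEdgeSet_adj] at hab
    obtain ⟨hmem, hne⟩ := hab
    rcases Set.mem_insert_iff.mp hmem with heq | hC
    · rw [Sym2.eq_iff] at heq
      rcases heq with ⟨rfl, rfl⟩ | ⟨rfl, rfl⟩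
      · rcases ih with h1 | ⟨h1, h2⟩ | ⟨h1, h2⟩
        · exact Or.inr (Or.inl ⟨Reachable.refl _, h1⟩)
        · exact Or.inl (h1.symm.trans h2)
        · exact Or.inl h2
      · rcases ih with h1 | ⟨h1, h2⟩ | ⟨h1, h2⟩
        · exact Or.inr (Or.inr ⟨Reachable.refl _, h1⟩)
        · exact Or.inl h2
        · exact Or.inl (h1.symm.trans h2)
    · have hadj : (fromEdgeSet C).Reachable a b :=
        ((fromEdgeSet_adj C).mpr ⟨hC, hne⟩).reachable
      rcases ih with h1 | ⟨h1, h2⟩ | ⟨h1, h2⟩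
      · exact Or.inl (hadj.trans h1)
      · exact Or.inr (Or.inl ⟨hadj.trans h1, h2⟩)
      · exact Or.inr (Or.inr ⟨hadj.trans h1, h2⟩)

lemma card_le_of_almost_inj {α β : Type*} [Finite α] [Finite β] (f : α → β) (x : α)
    (h : ∀ a a', f a = f a' → a = a' ∨ a = x ∨ a' = x) :
    Nat.card α ≤ Nat.card β + 1 := by
  classical
  have := Fintype.ofFinite α
  have := Fintype.ofFinite β
  rw [Nat.card_eq_fintype_card, Nat.card_eq_fintype_card]
  have hinj : Set.InjOn f ((Finset.univ.erase x : Finset α) : Set α) := by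
    intro a ha a' ha' hf
    simp only [Finset.coe_erase, Set.mem_diff, Set.mem_singleton_iff] at ha ha'
    rcases h a a' hf with h1 | h1 | h1 <;> tauto
  have := Finset.card_le_card_of_injOn f (fun a _ => Finset.mem_univ (f a)) hinj
  rw [Finset.card_erase_of_mem (Finset.mem_univ x), Finset.card_univ] at this
  rw [Finset.card_univ] at this
  omega

lemma card_quotient_ge [Fintype V] (C : Finset (Sym2 V)) :
    Fintype.card V ≤ Nat.card (Quotient (contractSetoid (↑C : Set (Sym2 V)))) + C.card := by
  classical
  induction C using Finset.induction with
  | empty =>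
    have : Function.Bijective (Quotient.mk (contractSetoid (↑(∅ : Finset (Sym2 V)) : Set (Sym2 V)))) := by
      refine ⟨fun a b hab => ?_, fun q => Quotient.exists_rep q⟩
      have := Quotient.exact hab
      change (fromEdgeSet ((↑(∅ : Finset (Sym2 V)) : Set (Sym2 V)))).Reachable a b at this
      rw [Finset.coe_empty, fromEdgeSet_empty] at this
      exact reachable_bot.mp this
    rw [← Nat.card_eq_of_bijective _ this]
    simp [Nat.card_eq_fintype_card]
  | @insert a C ha ih =>
    rw [Finset.card_insert_of_notMem ha]
    revert ha
    induction a using Sym2.ind with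
    | _ x y =>
    intro ha
    set S := contractSetoid (↑C : Set (Sym2 V))
    set S' := contractSetoid (↑(insert s(x,y) C) : Set (Sym2 V))
    have hmono : ∀ u v : V, S.r u v → S'.r u v := by
      intro u v huv
      exact huv.mono (fromEdgeSet_mono (by rw [Finset.coe_insert]; exact Set.subset_insert _ _))
    let g : Quotient S → Quotient S' := Quotient.map' id (fun u v huv => hmono u v huv)
    have hg : ∀ q q', g q = g q' → q = q' ∨ q = Quotient.mk S x ∨ q' = Quotient.mk S x := by
      intro q q' hq
      obtain ⟨u, rfl⟩ := Quotient.exists_rep q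
      obtain ⟨v, rfl⟩ := Quotient.exists_rep q'
      have : S'.r u v := Quotient.exact' hq
      have hreach : (fromEdgeSet (insert s(x,y) (↑C : Set (Sym2 V)))).Reachable u v := by
        have h' : (fromEdgeSet (↑(insert s(x,y) C) : Set (Sym2 V))).Reachable u v := this
        rw [Finset.coe_insert] at h'
        exact h'
      rcases reach_insert hreach with h1 | ⟨h1, h2⟩ | ⟨h1, h2⟩
      · exact Or.inl (Quotient.sound h1)
      · exact Or.inr (Or.inl (Quotient.sound h1))
      · refine Or.inr (Or.inr (Quotient.sound ?_))
        exact h2.symm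
    have hcard := card_le_of_almost_inj g (Quotient.mk S x) hg
    omega

open Finset

/-- If `(G, k)` is a yes-instance of Path Contraction on `n` vertices, then `G` has
at most `n - 1 + (k² + 5k + 4)/2` edges. -/
theorem stmt_3 [Fintype V] (G : SimpleGraph V) (k : ℕ) (h : PCYes G k) :
    G.edgeSet.ncard ≤ Fintype.card V - 1 + (k ^ 2 + 5 * k + 4) / 2 := by
  classical
  obtain ⟨C, hsub, hcard, m, ⟨φ⟩⟩ := h
  set c : V → Fin m := fun v => φ (Quotient.mk (contractSetoid ↑C) v) with hc
  -- surjectivity of c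
  have hcsurj : Function.Surjective c := by
    intro i
    obtain ⟨v, hv⟩ := Quotient.exists_rep (φ.symm i)
    refine ⟨v, ?_⟩
    simp only [hc, hv]
    exact φ.apply_symm_apply i
  -- adjacency transfer
  have hadj : ∀ {u v : V}, G.Adj u v →
      c u = c v ∨ ((c u).val + 1 = (c v).val ∨ (c v).val + 1 = (c u).val) := by
    intro u v huv
    by_cases hq : (Quotient.mk (contractSetoid (↑C : Set (Sym2 V))) u)
        = Quotient.mk (contractSetoid (↑C : Set (Sym2 V))) v
    · left; simp only [hc, hq]
    · right
      have hcadj : (contract G ↑C).Adj (Quotient.mk (contractSetoid ↑C) u)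
          (Quotient.mk (contractSetoid ↑C) v) := ⟨hq, u, v, rfl, rfl, huv⟩
      have : (pathGraph m).Adj (c u) (c v) := φ.map_rel_iff.mpr hcadj
      exact pathGraph_adj.mp this
  -- class sizes
  set A : ℕ → Finset V := fun i => Finset.univ.filter (fun v => (c v).val = i) with hA
  set t : ℕ → ℕ := fun i => (A i).card with ht
  have hn : Fintype.card V = ∑ i ∈ range m, t i := by
    rw [← Finset.card_univ]
    exact Finset.card_eq_sum_card_fiberwise (fun v _ => Finset.mem_range.mpr (c v).isLt)
  have ht1 : ∀ i < m, 1 ≤ t i := by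
    intro i hi
    obtain ⟨v, hv⟩ := hcsurj ⟨i, hi⟩
    have : v ∈ A i := by simp [hA, hv]
    exact Finset.card_pos.mpr ⟨v, this⟩
  have hm : Nat.card (Quotient (contractSetoid (↑C : Set (Sym2 V)))) = m := by
    rw [Nat.card_congr φ.toEquiv, Nat.card_eq_fintype_card, Fintype.card_fin]
  have hs : Fintype.card V ≤ m + k := by
    have := card_quotient_ge C
    omega
  -- double counting
  set D : Finset (V × V) := Finset.univ.filter (fun (x, y) => G.Adj x y) with hD
  have hD2 : 2 * G.edgeFinset.card = D.card := G.two_mul_card_edgeFinset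
  have hDmem : ∀ p : V × V, p ∈ D ↔ G.Adj p.1 p.2 := by
    rintro ⟨u, v⟩
    simp [hD]
  set Ds : Finset (V × V) := D.filter (fun p => c p.1 = c p.2) with hDs
  set Dd : Finset (V × V) := D.filter (fun p => ¬ c p.1 = c p.2) with hDd
  have hsplit : Ds.card + Dd.card = D.card :=
    Finset.card_filter_add_card_filter_not _
  -- same-class pairs
  have hDs_card : Ds.card ≤ ∑ i ∈ range m, (t i * t i - t i) := by
    rw [Finset.card_eq_sum_card_fiberwise
      (f := fun p : V × V => (c p.1).val) (t := range m)
      (fun p _ => Finset.mem_range.mpr (c p.1).isLt)]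
    apply Finset.sum_le_sum
    intro i _
    have hsub : Ds.filter (fun p => (c p.1).val = i) ⊆ (A i).offDiag := by
      intro p hp
      simp only [Finset.mem_filter, hDs] at hp
      obtain ⟨⟨hpD, hpc⟩, hpi⟩ := hp
      have hAdj := (hDmem p).mp hpD
      rw [Finset.mem_offDiag]
      refine ⟨by simp [hA, hpi], by simp [hA, ← hpc, hpi], hAdj.ne⟩
    calc (Ds.filter (fun p => (c p.1).val = i)).card
        ≤ (A i).offDiag.card := Finset.card_le_card hsub
      _ = t i * t i - t i := by rw [Finset.offDiag_card]
  -- different-class pairs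
  set Dlt : Finset (V × V) := Dd.filter (fun p => (c p.1).val < (c p.2).val) with hDlt
  set Dgt : Finset (V × V) := Dd.filter (fun p => ¬ (c p.1).val < (c p.2).val) with hDgt
  have hsplit2 : Dlt.card + Dgt.card = Dd.card :=
    Finset.card_filter_add_card_filter_not _
  have hgt_lt : Dgt.card = Dlt.card := by
    refine Finset.card_bij' (fun p _ => p.swap) (fun p _ => p.swap) ?_ ?_
      (fun p _ => Prod.swap_swap p) (fun p _ => Prod.swap_swap p)
    · intro p hp
      simp only [hDgt, hDlt, hDd, Finset.mem_filter] at hp ⊢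
      obtain ⟨⟨hpD, hne⟩, hnlt⟩ := hp
      have hAdj := (hDmem p).mp hpD
      have hvne : (c p.1).val ≠ (c p.2).val := fun hv => hne (Fin.ext hv)
      refine ⟨⟨(hDmem p.swap).mpr hAdj.symm, ?_⟩, ?_⟩
      · simp only [Prod.fst_swap, Prod.snd_swap]
        exact fun hv => hne hv.symm
      · simp only [Prod.fst_swap, Prod.snd_swap]
        omega
    · intro p hp
      simp only [hDgt, hDlt, hDd, Finset.mem_filter] at hp ⊢
      obtain ⟨⟨hpD, hne⟩, hlt⟩ := hp
      have hAdj := (hDmem p).mp hpD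
      refine ⟨⟨(hDmem p.swap).mpr hAdj.symm, ?_⟩, ?_⟩
      · simp only [Prod.fst_swap, Prod.snd_swap]
        exact fun hv => hne hv.symm
      · simp only [Prod.fst_swap, Prod.snd_swap]
        omega
  -- consecutive structure of Dlt
  have hDlt_mem : ∀ p ∈ Dlt, (c p.1).val + 1 = (c p.2).val := by
    intro p hp
    simp only [hDlt, hDd, Finset.mem_filter] at hp
    obtain ⟨⟨hpD, hne⟩, hlt⟩ := hp
    rcases hadj ((hDmem p).mp hpD) with h1 | h1 | h1
    · exact absurd h1 hne
    · exact h1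
    · omega
  have hDlt_card : Dlt.card ≤ ∑ i ∈ range (m-1), t i * t (i+1) := by
    rw [Finset.card_eq_sum_card_fiberwise
      (f := fun p : V × V => (c p.1).val) (t := range (m-1))
      (fun p hp => Finset.mem_range.mpr (show (c p.1).val < m - 1 by
        have h1 := hDlt_mem p hp
        have h2 := (c p.2).isLt
        omega))]
    apply Finset.sum_le_sum
    intro i _
    have hsub : Dlt.filter (fun p => (c p.1).val = i) ⊆ A i ×ˢ A (i+1) := by
      intro p hp
      simp only [Finset.mem_filter] at hp
      obtain ⟨hpD, hpi⟩ := hp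
      have h1 := hDlt_mem p hpD
      rw [Finset.mem_product]
      constructor
      · simp [hA, hpi]
      · simp only [hA, Finset.mem_filter, Finset.mem_univ, true_and]
        omega
    calc (Dlt.filter (fun p => (c p.1).val = i)).card
        ≤ (A i ×ˢ A (i+1)).card := Finset.card_le_card hsub
      _ = t i * t (i+1) := by rw [Finset.card_product]
  -- put it together
  have hkey := key_arith m k t ht1 (by omega)
  have hE : G.edgeSet.ncard = G.edgeFinset.card := by
    rw [← Set.ncard_coe_finset, coe_edgeFinset]
  have hfinal : 2 * G.edgeFinset.card
      ≤ 2 * (∑ i ∈ range m, t i - 1) + (k^2 + 5*k + 4) := by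
    calc 2 * G.edgeFinset.card = D.card := hD2
      _ = Ds.card + (Dlt.card + Dgt.card) := by omega
      _ = Ds.card + 2 * Dlt.card := by omega
      _ ≤ ∑ i ∈ range m, (t i * t i - t i) + 2 * ∑ i ∈ range (m-1), t i * t (i+1) := by
          have := hDs_card; have := hDlt_card; omega
      _ ≤ _ := hkey
  have hpar : k^2 % 2 = k % 2 := by
    rcases Nat.even_or_odd k with ⟨a, rfl⟩ | ⟨a, rfl⟩ <;> ring_nf <;> omega
  rw [hE]
  omega
end

section
/- If (G,k) is a yes-instance of Path Contraction and G' is obtained from G by contracting an arbitrary edge, then (G',k) is also a yes-instance. -/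
open SimpleGraph

variable {V : Type*}

lemma aux_mk_eq {S : Set (Sym2 V)} {x y : V} :
    Quotient.mk (contractSetoid S) x = Quotient.mk (contractSetoid S) y ↔
      (fromEdgeSet S).Reachable x y :=
  ⟨fun h => Quotient.exact h, fun h => Quotient.sound (by exact h)⟩

lemma aux_contract_adj {G : SimpleGraph V} {S : Set (Sym2 V)} {x y : V} :
    (contract G S).Adj (Quotient.mk (contractSetoid S) x) (Quotient.mk (contractSetoid S) y) ↔
      ¬ (fromEdgeSet S).Reachable x y ∧
      ∃ a b : V, (fromEdgeSet S).Reachable a x ∧ (fromEdgeSet S).Reachable b y ∧ G.Adj a b := by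
  constructor
  · rintro ⟨hne, p, q, hp, hq, h⟩
    exact ⟨fun hr => hne (aux_mk_eq.2 hr), p, q, aux_mk_eq.1 hp, aux_mk_eq.1 hq, h⟩
  · rintro ⟨hne, p, q, hp, hq, h⟩
    exact ⟨fun he => hne (aux_mk_eq.1 he), p, q, aux_mk_eq.2 hp, aux_mk_eq.2 hq, h⟩

def aux_contractCongr (G : SimpleGraph V) (S S' : Set (Sym2 V))
    (h : ∀ x y : V, (fromEdgeSet S).Reachable x y ↔ (fromEdgeSet S').Reachable x y) :
    contract G S ≃g contract G S' where
  toFun := Quotient.lift (fun x => Quotient.mk (contractSetoid S') x)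
    (fun a b hab => Quotient.sound ((h a b).1 hab))
  invFun := Quotient.lift (fun x => Quotient.mk (contractSetoid S) x)
    (fun a b hab => Quotient.sound ((h a b).2 hab))
  left_inv := by rintro ⟨x⟩; rfl
  right_inv := by rintro ⟨x⟩; rfl
  map_rel_iff' := by
    rintro ⟨x⟩ ⟨y⟩
    show (contract G S').Adj (Quotient.mk _ x) (Quotient.mk _ y) ↔
      (contract G S).Adj (Quotient.mk _ x) (Quotient.mk _ y)
    rw [aux_contract_adj, aux_contract_adj]
    simp only [h]

section Comp
variable (G : SimpleGraph V) (S T : Set (Sym2 V))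

lemma aux_comp_step {α β : Quotient (contractSetoid S)}
    (h : (fromEdgeSet (Sym2.map (Quotient.mk (contractSetoid S)) '' T)).Adj α β)
    {x y : V} (hx : Quotient.mk (contractSetoid S) x = α)
    (hy : Quotient.mk (contractSetoid S) y = β) :
    (fromEdgeSet (S ∪ T)).Reachable x y := by
  rw [fromEdgeSet_adj] at h
  obtain ⟨⟨z, hz, hmz⟩, hne⟩ := h
  induction z using Sym2.ind with
  | _ a b =>
  rw [Sym2.map_pair_eq, Sym2.eq_iff] at hmz
  have hmono : fromEdgeSet S ≤ fromEdgeSet (S ∪ T) :=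
    fromEdgeSet_mono Set.subset_union_left
  rcases hmz with ⟨ha, hb⟩ | ⟨ha, hb⟩
  · have h1 : (fromEdgeSet (S ∪ T)).Reachable x a :=
      ((aux_mk_eq.1 (hx.trans ha.symm)).mono hmono).symm.symm
    have hab : (fromEdgeSet (S ∪ T)).Adj a b := by
      rw [fromEdgeSet_adj]
      refine ⟨Or.inr hz, fun hh => hne ?_⟩
      rw [← ha, ← hb, hh]
    have h2 : (fromEdgeSet (S ∪ T)).Reachable b y :=
      (aux_mk_eq.1 (hb.trans hy.symm)).mono hmono
    exact (h1.trans hab.reachable).trans h2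
  · have h1 : (fromEdgeSet (S ∪ T)).Reachable x b :=
      (aux_mk_eq.1 (hx.trans hb.symm)).mono hmono
    have hab : (fromEdgeSet (S ∪ T)).Adj b a := by
      rw [fromEdgeSet_adj]
      refine ⟨Or.inr (by rwa [Sym2.eq_swap]), fun hh => hne ?_⟩
      rw [← ha, ← hb, hh]
    have h2 : (fromEdgeSet (S ∪ T)).Reachable a y :=
      (aux_mk_eq.1 (ha.trans hy.symm)).mono hmono
    exact (h1.trans hab.reachable).trans h2

lemma aux_comp_reach (x y : V) :
    (fromEdgeSet (Sym2.map (Quotient.mk (contractSetoid S)) '' T)).Reachable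
      (Quotient.mk (contractSetoid S) x) (Quotient.mk (contractSetoid S) y) ↔
    (fromEdgeSet (S ∪ T)).Reachable x y := by
  constructor
  · intro h
    rw [reachable_iff_reflTransGen] at h
    have key : ∀ β, Relation.ReflTransGen
        (fromEdgeSet (Sym2.map (Quotient.mk (contractSetoid S)) '' T)).Adj
        (Quotient.mk (contractSetoid S) x) β →
        ∀ y' : V, Quotient.mk (contractSetoid S) y' = β →
          (fromEdgeSet (S ∪ T)).Reachable x y' := by
      intro β hβ
      induction hβ with
      | refl =>
        intro y' hy'
        exact (aux_mk_eq.1 hy'.symm).mono (fromEdgeSet_mono Set.subset_union_left)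
      | tail h1 h2 ih =>
        intro y' hy'
        rename_i b c
        obtain ⟨b', hb'⟩ := Quotient.exists_rep b
        exact (ih b' hb').trans (aux_comp_step S T h2 hb' hy')
    exact key _ h y rfl
  · intro h
    rw [reachable_iff_reflTransGen] at h
    induction h with
    | refl => exact Reachable.refl _
    | tail h1 h2 ih =>
      rename_i b c
      rw [fromEdgeSet_adj] at h2
      obtain ⟨hmem, hne⟩ := h2
      rcases hmem with hS | hT
      · have : Quotient.mk (contractSetoid S) b = Quotient.mk (contractSetoid S) c :=
          aux_mk_eq.2 (SimpleGraph.Adj.reachable (by rw [fromEdgeSet_adj]; exact ⟨hS, hne⟩))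
        rwa [this] at ih
      · by_cases hq : Quotient.mk (contractSetoid S) b = Quotient.mk (contractSetoid S) c
        · rwa [hq] at ih
        · refine ih.trans (SimpleGraph.Adj.reachable ?_)
          rw [fromEdgeSet_adj]
          exact ⟨⟨s(b, c), hT, Sym2.map_pair_eq _ _ _⟩, hq⟩

def aux_compIso :
    contract G (S ∪ T) ≃g
      contract (contract G S) (Sym2.map (Quotient.mk (contractSetoid S)) '' T) where
  toFun := Quotient.lift
      (fun x => Quotient.mk (contractSetoid (Sym2.map (Quotient.mk (contractSetoid S)) '' T))
        (Quotient.mk (contractSetoid S) x))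
      (fun a b hab => Quotient.sound (by exact (aux_comp_reach S T a b).2 hab))
  invFun := Quotient.lift
      (Quotient.lift (fun x => Quotient.mk (contractSetoid (S ∪ T)) x)
        (fun a b hab => Quotient.sound (by
          exact Reachable.mono (fromEdgeSet_mono Set.subset_union_left) hab)))
      (fun α β hαβ => by
        induction α using Quotient.ind with | _ a =>
        induction β using Quotient.ind with | _ b =>
        exact Quotient.sound (by exact (aux_comp_reach S T a b).1 hαβ))
  left_inv := by rintro ⟨x⟩; rfl
  right_inv := by rintro ⟨⟨x⟩⟩; rfl
  map_rel_iff' := by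
    rintro ⟨x⟩ ⟨y⟩
    show (contract (contract G S) _).Adj
        (Quotient.mk _ (Quotient.mk _ x)) (Quotient.mk _ (Quotient.mk _ y)) ↔
      (contract G (S ∪ T)).Adj (Quotient.mk _ x) (Quotient.mk _ y)
    rw [aux_contract_adj, aux_contract_adj]
    constructor
    · rintro ⟨hn, α, β, hα, hβ, hadj⟩
      obtain ⟨hne', a, b, ha, hb, hab⟩ := hadj
      refine ⟨fun hr => hn ((aux_comp_reach S T x y).2 hr), a, b, ?_, ?_, hab⟩
      · exact (aux_comp_reach S T a x).1 (by rwa [ha])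
      · exact (aux_comp_reach S T b y).1 (by rwa [hb])
    · rintro ⟨hn, a, b, ha, hb, hab⟩
      refine ⟨fun hr => hn ((aux_comp_reach S T x y).1 hr),
        Quotient.mk _ a, Quotient.mk _ b,
        (aux_comp_reach S T a x).2 ha, (aux_comp_reach S T b y).2 hb, ?_⟩
      refine ⟨fun he => ?_, a, b, rfl, rfl, hab⟩
      · have : (fromEdgeSet (S ∪ T)).Reachable a b :=
          (aux_mk_eq.1 he).mono (fromEdgeSet_mono Set.subset_union_left)
        exact hn (ha.symm.trans (this.trans hb))

end Comp

section IsoInv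
variable {W : Type*} {G : SimpleGraph V} {H : SimpleGraph W}

lemma aux_iso_fromEdgeSet_adj (φ : G ≃g H) (S : Set (Sym2 V)) (x y : V) :
    (fromEdgeSet (Sym2.map φ '' S)).Adj (φ x) (φ y) ↔ (fromEdgeSet S).Adj x y := by
  rw [fromEdgeSet_adj, fromEdgeSet_adj]
  constructor
  · rintro ⟨⟨z, hz, hmz⟩, hne⟩
    induction z using Sym2.ind with
    | _ a b =>
    rw [Sym2.map_pair_eq, Sym2.eq_iff] at hmz
    have hni : x ≠ y := fun hh => hne (by rw [hh])
    rcases hmz with ⟨ha, hb⟩ | ⟨ha, hb⟩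
    · have : a = x := φ.injective ha
      have hb' : b = y := φ.injective hb
      subst this; subst hb'; exact ⟨hz, hni⟩
    · have : a = y := φ.injective ha
      have hb' : b = x := φ.injective hb
      subst this; subst hb'; rw [Sym2.eq_swap]; exact ⟨hz, hni⟩
  · rintro ⟨hz, hne⟩
    exact ⟨⟨s(x, y), hz, Sym2.map_pair_eq _ _ _⟩, fun hh => hne (φ.injective hh)⟩

lemma aux_iso_reach (φ : G ≃g H) (S : Set (Sym2 V)) (x y : V) :
    (fromEdgeSet (Sym2.map φ '' S)).Reachable (φ x) (φ y) ↔
      (fromEdgeSet S).Reachable x y := by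
  constructor
  · intro h
    rw [reachable_iff_reflTransGen] at h
    rw [reachable_iff_reflTransGen]
    have key : ∀ w, Relation.ReflTransGen (fromEdgeSet (Sym2.map φ '' S)).Adj (φ x) w →
        Relation.ReflTransGen (fromEdgeSet S).Adj x (φ.symm w) := by
      intro w hw
      induction hw with
      | refl => rw [RelIso.symm_apply_apply]
      | tail h1 h2 ih =>
        refine ih.tail ?_
        apply (aux_iso_fromEdgeSet_adj φ S _ _).1
        rwa [RelIso.apply_symm_apply, RelIso.apply_symm_apply]
    have := key _ h
    rwa [RelIso.symm_apply_apply] at this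
  · intro h
    rw [reachable_iff_reflTransGen] at h
    rw [reachable_iff_reflTransGen]
    induction h with
    | refl => exact Relation.ReflTransGen.refl
    | tail h1 h2 ih => exact ih.tail ((aux_iso_fromEdgeSet_adj φ S _ _).2 h2)

def aux_isoContract (φ : G ≃g H) (S : Set (Sym2 V)) :
    contract G S ≃g contract H (Sym2.map φ '' S) where
  toFun := Quotient.lift
      (fun x => Quotient.mk (contractSetoid (Sym2.map φ '' S)) (φ x))
      (fun a b hab => Quotient.sound (by exact (aux_iso_reach φ S a b).2 hab))
  invFun := Quotient.lift
      (fun w => Quotient.mk (contractSetoid S) (φ.symm w))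
      (fun a b hab => Quotient.sound (by
        have : (fromEdgeSet (Sym2.map φ '' S)).Reachable (φ (φ.symm a)) (φ (φ.symm b)) := by
          rwa [RelIso.apply_symm_apply, RelIso.apply_symm_apply]
        exact (aux_iso_reach φ S _ _).1 this))
  left_inv := by rintro ⟨x⟩; exact congrArg _ (φ.symm_apply_apply x)
  right_inv := by rintro ⟨w⟩; exact congrArg _ (φ.apply_symm_apply w)
  map_rel_iff' := by
    rintro ⟨x⟩ ⟨y⟩
    show (contract H _).Adj (Quotient.mk _ (φ x)) (Quotient.mk _ (φ y)) ↔
      (contract G S).Adj (Quotient.mk _ x) (Quotient.mk _ y)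
    rw [aux_contract_adj, aux_contract_adj]
    constructor
    · rintro ⟨hn, a, b, ha, hb, hab⟩
      refine ⟨fun hr => hn ((aux_iso_reach φ S x y).2 hr),
        φ.symm a, φ.symm b, ?_, ?_, φ.symm.map_rel_iff.2 hab⟩
      · exact (aux_iso_reach φ S _ _).1 (by simpa using ha)
      · exact (aux_iso_reach φ S _ _).1 (by simpa using hb)
    · rintro ⟨hn, a, b, ha, hb, hab⟩
      exact ⟨fun hr => hn ((aux_iso_reach φ S x y).1 hr),
        φ a, φ b, (aux_iso_reach φ S _ _).2 ha, (aux_iso_reach φ S _ _).2 hb,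
        φ.map_rel_iff.2 hab⟩

end IsoInv

lemma aux_single_reach {α : Type*} {a b : α} (hne : a ≠ b) (x y : α) :
    (fromEdgeSet {s(a, b)}).Reachable x y ↔
      x = y ∨ (x = a ∧ y = b) ∨ (x = b ∧ y = a) := by
  constructor
  · intro h
    rw [reachable_iff_reflTransGen] at h
    induction h with
    | refl => exact Or.inl rfl
    | tail h1 h2 ih =>
      rw [fromEdgeSet_adj, Set.mem_singleton_iff, Sym2.eq_iff] at h2
      obtain ⟨hbc, -⟩ := h2
      rcases ih with h3 | ⟨h3, h4⟩ | ⟨h3, h4⟩ <;> rcases hbc with ⟨h5, h6⟩ | ⟨h5, h6⟩ <;>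
        subst_vars <;> tauto
  · rintro (rfl | ⟨rfl, rfl⟩ | ⟨rfl, rfl⟩)
    · exact Reachable.refl _
    · exact SimpleGraph.Adj.reachable (by rw [fromEdgeSet_adj]; exact ⟨rfl, hne⟩)
    · exact SimpleGraph.Adj.reachable (by
        rw [fromEdgeSet_adj]; exact ⟨by rw [Sym2.eq_swap]; exact rfl, hne.symm⟩)

lemma aux_path_contract (n : ℕ) (a b : Fin n) (hab : (a : ℕ) + 1 = (b : ℕ)) :
    Nonempty (contract (pathGraph n) {s(a, b)} ≃g pathGraph (n - 1)) := by
  have hbn : (b : ℕ) < n := b.isLt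
  have hne : a ≠ b := fun h => by rw [h] at hab; omega
  have hquot : ∀ x y : Fin n,
      Quotient.mk (contractSetoid {s(a, b)}) x = Quotient.mk (contractSetoid {s(a, b)}) y ↔
        (x = y ∨ (x = a ∧ y = b) ∨ (x = b ∧ y = a)) := fun x y => by
    rw [aux_mk_eq, aux_single_reach hne]
  set f : Fin n → Fin (n - 1) := fun k =>
    ⟨if (k : ℕ) ≤ (a : ℕ) then (k : ℕ) else (k : ℕ) - 1, by
      have := k.isLt; split <;> omega⟩ with hf
  have hfval : ∀ k : Fin n,
      (f k : ℕ) = if (k : ℕ) ≤ (a : ℕ) then (k : ℕ) else (k : ℕ) - 1 := fun k => rfl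
  have hwd : ∀ x y : Fin n, (fromEdgeSet {s(a, b)}).Reachable x y → f x = f y := by
    intro x y hxy
    have h := (aux_single_reach hne x y).1 hxy
    apply Fin.ext
    rcases h with rfl | ⟨rfl, rfl⟩ | ⟨rfl, rfl⟩ <;> simp only [hfval] <;> split_ifs <;> omega
  set g : Fin (n - 1) → Fin n := fun m =>
    ⟨if (m : ℕ) ≤ (a : ℕ) then (m : ℕ) else (m : ℕ) + 1, by
      have := m.isLt; split <;> omega⟩ with hg
  have hgval : ∀ m : Fin (n - 1),
      (g m : ℕ) = if (m : ℕ) ≤ (a : ℕ) then (m : ℕ) else (m : ℕ) + 1 := fun m => rfl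
  have hfwd : ∀ x y : Fin n, (f x : ℕ) + 1 = (f y : ℕ) →
      ∃ p q : Fin n,
        Quotient.mk (contractSetoid {s(a, b)}) p = Quotient.mk (contractSetoid {s(a, b)}) x ∧
        Quotient.mk (contractSetoid {s(a, b)}) q = Quotient.mk (contractSetoid {s(a, b)}) y ∧
        (pathGraph n).Adj p q := by
    intro x y h
    simp only [hfval] at h
    split_ifs at h
    · exact ⟨x, y, rfl, rfl, by rw [pathGraph_adj]; omega⟩
    · by_cases h3 : (x : ℕ) = (a : ℕ)
      · refine ⟨b, y, ?_, rfl, by rw [pathGraph_adj]; omega⟩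
        rw [hquot]; right; right; exact ⟨rfl, Fin.ext h3⟩
      · refine ⟨x, a, rfl, ?_, by rw [pathGraph_adj]; omega⟩
        rw [hquot]; right; left; exact ⟨rfl, Fin.ext (by omega)⟩
    · exact absurd h (by omega)
    · exact ⟨x, y, rfl, rfl, by rw [pathGraph_adj]; omega⟩
  refine ⟨{ toFun := Quotient.lift f hwd,
            invFun := fun m => Quotient.mk (contractSetoid {s(a, b)}) (g m),
            left_inv := ?_, right_inv := ?_, map_rel_iff' := ?_ }⟩
  · rintro ⟨x⟩
    show Quotient.mk (contractSetoid {s(a, b)}) (g (f x)) = Quotient.mk _ x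
    rw [hquot]
    by_cases h1 : (x : ℕ) ≤ (a : ℕ)
    · left; apply Fin.ext; simp only [hgval, hfval]; split_ifs <;> omega
    · by_cases h2 : (x : ℕ) = (a : ℕ) + 1
      · right; left
        refine ⟨?_, Fin.ext (by omega)⟩
        apply Fin.ext; simp only [hgval, hfval]; split_ifs <;> omega
      · left; apply Fin.ext; simp only [hgval, hfval]
        have := x.isLt
        split_ifs <;> omega
  · intro m
    show f (g m) = m
    apply Fin.ext
    have := m.isLt
    simp only [hfval, hgval]
    split_ifs <;> omega
  · rintro ⟨x⟩ ⟨y⟩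
    show (pathGraph (n - 1)).Adj (f x) (f y) ↔
      (contract (pathGraph n) {s(a, b)}).Adj (Quotient.mk _ x) (Quotient.mk _ y)
    constructor
    · intro h
      rw [pathGraph_adj] at h
      have hne' : Quotient.mk (contractSetoid {s(a, b)}) x ≠
          Quotient.mk (contractSetoid {s(a, b)}) y := by
        intro he
        have := hwd x y (aux_mk_eq.1 he)
        rw [Fin.ext_iff] at this
        omega
      rcases h with h | h
      · obtain ⟨p, q, hp, hq, hpq⟩ := hfwd x y h
        exact ⟨hne', p, q, hp, hq, hpq⟩
      · obtain ⟨p, q, hp, hq, hpq⟩ := hfwd y x h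
        exact ⟨hne', q, p, hq, hp, hpq.symm⟩
    · rintro ⟨hne', p, q, hp, hq, hpq⟩
      have hfp : f p = f x := hwd p x (aux_mk_eq.1 hp)
      have hfq : f q = f y := hwd q y (aux_mk_eq.1 hq)
      have hnrel : ¬(p = q ∨ (p = a ∧ q = b) ∨ (p = b ∧ q = a)) := by
        intro hr
        exact hne' (by rw [← hp, ← hq, hquot]; exact hr)
      rw [pathGraph_adj] at hpq
      rw [pathGraph_adj, ← hfp, ← hfq]
      simp only [Fin.ext_iff, not_or, not_and] at hnrel
      simp only [hfval]
      have h1 := p.isLt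
      have h2 := q.isLt
      obtain ⟨n1, n2, n3⟩ := hnrel
      split_ifs <;> omega

lemma aux_isPathGraph_iso {W W' : Type*} {H : SimpleGraph W} {H' : SimpleGraph W'}
    (φ : H ≃g H') (h : IsPathGraph H) : IsPathGraph H' := by
  obtain ⟨n, ⟨ψ⟩⟩ := h
  exact ⟨n, ⟨φ.symm.trans ψ⟩⟩

lemma aux_key (G : SimpleGraph V) (S : Set (Sym2 V)) (u v : V) (huv : G.Adj u v)
    (hp : IsPathGraph (contract G S)) : IsPathGraph (contract G (S ∪ {s(u, v)})) := by
  by_cases hr : (fromEdgeSet S).Reachable u v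
  · refine aux_isPathGraph_iso (aux_contractCongr G S (S ∪ {s(u, v)}) ?_) hp
    intro x y
    constructor
    · exact fun h => h.mono (fromEdgeSet_mono Set.subset_union_left)
    · intro h
      rw [reachable_iff_reflTransGen] at h
      induction h with
      | refl => exact Reachable.refl _
      | tail h1 h2 ih =>
        rw [fromEdgeSet_adj] at h2
        obtain ⟨hmem, hnebc⟩ := h2
        rcases hmem with hS | hE
        · exact ih.trans (SimpleGraph.Adj.reachable (by rw [fromEdgeSet_adj]; exact ⟨hS, hnebc⟩))
        · rw [Set.mem_singleton_iff, Sym2.eq_iff] at hE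
          rcases hE with ⟨rfl, rfl⟩ | ⟨rfl, rfl⟩
          · exact ih.trans hr
          · exact ih.trans hr.symm
  · obtain ⟨n, ⟨ψ⟩⟩ := hp
    -- composition iso
    have h1 := aux_compIso G S {s(u, v)}
    have himg : Sym2.map (Quotient.mk (contractSetoid S)) '' {s(u, v)} =
        {s(Quotient.mk (contractSetoid S) u, Quotient.mk (contractSetoid S) v)} := by
      rw [Set.image_singleton, Sym2.map_pair_eq]
    rw [himg] at h1
    -- iso invariance
    have h2 := aux_isoContract ψ
      {s(Quotient.mk (contractSetoid S) u, Quotient.mk (contractSetoid S) v)}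
    have himg2 : Sym2.map ψ '' {s(Quotient.mk (contractSetoid S) u,
        Quotient.mk (contractSetoid S) v)} =
        {s(ψ (Quotient.mk (contractSetoid S) u), ψ (Quotient.mk (contractSetoid S) v))} := by
      rw [Set.image_singleton, Sym2.map_pair_eq]
    rw [himg2] at h2
    -- the two endpoints are adjacent in the path graph
    have hadj : (contract G S).Adj (Quotient.mk (contractSetoid S) u)
        (Quotient.mk (contractSetoid S) v) := by
      refine ⟨fun he => hr (aux_mk_eq.1 he), u, v, rfl, rfl, huv⟩
    have hadj' : (pathGraph n).Adj (ψ (Quotient.mk (contractSetoid S) u))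
        (ψ (Quotient.mk (contractSetoid S) v)) := ψ.map_rel_iff.2 hadj
    rw [pathGraph_adj] at hadj'
    set α := ψ (Quotient.mk (contractSetoid S) u)
    set β := ψ (Quotient.mk (contractSetoid S) v)
    rcases hadj' with hd | hd
    · obtain ⟨χ⟩ := aux_path_contract n α β hd
      exact ⟨n - 1, ⟨((h1.trans h2).trans χ)⟩⟩
    · obtain ⟨χ⟩ := aux_path_contract n β α hd
      have hswap : ({s(α, β)} : Set (Sym2 (Fin n))) = {s(β, α)} := by
        rw [Sym2.eq_swap]
      rw [hswap] at h2
      exact ⟨n - 1, ⟨((h1.trans h2).trans χ)⟩⟩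

/-- If `(G, k)` is a yes-instance of Path Contraction and `G'` is obtained from `G`
by contracting an arbitrary edge `{u,v}`, then `(G', k)` is also a yes-instance. -/
theorem stmt_4 (G : SimpleGraph V) (k : ℕ) (u v : V) (huv : G.Adj u v)
    (h : PCYes G k) :
    PCYes (contract G {s(u, v)}) k := by
  classical
  obtain ⟨C, hsub, hcard, hpath⟩ := h
  set q : V → Quotient (contractSetoid ({s(u, v)} : Set (Sym2 V))) :=
    Quotient.mk (contractSetoid ({s(u, v)} : Set (Sym2 V))) with hq
  refine ⟨(C.image (Sym2.map q)).filter (fun z => ¬ z.IsDiag), ?_, ?_, ?_⟩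
  · -- subset of edge set
    intro z hz
    simp only [Finset.coe_filter, Set.mem_setOf_eq, Finset.mem_image] at hz
    obtain ⟨⟨w, hw, rfl⟩, hdiag⟩ := hz
    induction w using Sym2.ind with
    | _ x y =>
    rw [Sym2.map_pair_eq]
    rw [mem_edgeSet]
    refine ⟨fun he => hdiag ?_, x, y, rfl, rfl, hsub hw⟩
    rw [Sym2.map_pair_eq, Sym2.isDiag_iff_proj_eq]
    exact he
  · -- cardinality
    exact (Finset.card_filter_le _ _).trans (Finset.card_image_le.trans hcard)
  · -- path graph
    have hfe : fromEdgeSet (↑((C.image (Sym2.map q)).filter (fun z => ¬ z.IsDiag))) =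
        fromEdgeSet (Sym2.map q '' ↑C) := by
      ext α β
      rw [fromEdgeSet_adj, fromEdgeSet_adj]
      simp only [Finset.coe_filter, Set.mem_setOf_eq, Finset.mem_image, Finset.mem_coe,
        Set.mem_image]
      constructor
      · rintro ⟨⟨⟨w, hw, hmap⟩, -⟩, hne⟩
        exact ⟨⟨w, hw, hmap⟩, hne⟩
      · rintro ⟨⟨w, hw, hmap⟩, hne⟩
        refine ⟨⟨⟨w, hw, hmap⟩, fun hd => hne ?_⟩, hne⟩
        exact Sym2.mk_isDiag_iff.1 hd
    have iso0 := aux_contractCongr (contract G {s(u, v)})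
      (↑((C.image (Sym2.map q)).filter (fun z => ¬ z.IsDiag))) (Sym2.map q '' ↑C)
      (fun x y => by rw [hfe])
    have h1 := aux_compIso G {s(u, v)} ↑C
    have hkey := aux_key G ↑C u v huv hpath
    rw [Set.union_comm] at hkey
    exact aux_isPathGraph_iso ((iso0.trans h1.symm).symm) hkey
end

section
/- If (G,k) is a yes-instance of Path Contraction, then G contains no subtree (subgraph that is a tree) with more than k+2 leaves. -/
open SimpleGraph

variable {V : Type*}

lemma aux_exists_next {W : Type*} (H : SimpleGraph W) {v r : W} (hr : H.Reachable v r)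
    (hne : v ≠ r) : ∃ x, H.Adj v x ∧ H.dist x r + 1 = H.dist v r := by
  obtain ⟨p, hp⟩ := hr.exists_walk_length_eq_dist
  cases p with
  | nil => exact absurd rfl hne
  | @cons _ x _ h q =>
    refine ⟨x, h, ?_⟩
    have h1 : H.dist x r ≤ q.length := SimpleGraph.dist_le q
    obtain ⟨w, hw⟩ := (q.reachable).exists_walk_length_eq_dist
    have h2 : H.dist v r ≤ H.dist x r + 1 := by
      have := SimpleGraph.dist_le (SimpleGraph.Walk.cons h w)
      simpa [SimpleGraph.Walk.length_cons, hw] using this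
    simp only [SimpleGraph.Walk.length_cons] at hp
    omega

lemma aux_walk_ivt {W : Type*} {H : SimpleGraph W} (f : W → ℕ)
    (hf : ∀ {a b}, H.Adj a b → f a = f b ∨ f a + 1 = f b ∨ f b + 1 = f a) :
    ∀ {x y : W} (p : H.Walk x y) (j : ℕ), f x ≤ j → j ≤ f y → ∃ w ∈ p.support, f w = j := by
  intro x y p
  induction p with
  | nil => intro j h1 h2; exact ⟨_, by simp, le_antisymm h1 h2⟩
  | @cons u v y h q ih =>
    intro j h1 h2
    rcases eq_or_lt_of_le h1 with heq | hlt
    · exact ⟨u, by simp, heq⟩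
    · have : f v ≤ j := by rcases hf h with h' | h' | h' <;> omega
      obtain ⟨w, hw, hwj⟩ := ih j this h2
      exact ⟨w, by simp [hw], hwj⟩

lemma aux_internal {W : Type*} {H : SimpleGraph W} :
    ∀ {x y : W} (p : H.Walk x y), p.IsPath → ∀ {w}, w ∈ p.support → w ≠ x → w ≠ y →
      ∃ a b, a ≠ b ∧ H.Adj w a ∧ H.Adj w b := by
  intro x y p
  induction p with
  | nil => intro _ w hw hx _; simp at hw; exact absurd hw hx
  | @cons u v y h q ih =>
    intro hp w hw hx hy
    rw [SimpleGraph.Walk.support_cons, List.mem_cons] at hw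
    rcases hw with rfl | hw
    · exact absurd rfl hx
    by_cases hv : w = v
    · subst hv
      cases q with
      | nil => exact absurd rfl hy
      | @cons _ t _ h2 q2 =>
        refine ⟨u, t, ?_, h.symm, h2⟩
        intro hut
        have hu : u ∉ (SimpleGraph.Walk.cons h2 q2).support :=
          ((SimpleGraph.Walk.cons_isPath_iff _ _).mp hp).2
        apply hu
        rw [SimpleGraph.Walk.support_cons, hut]
        exact List.mem_cons_of_mem _ q2.start_mem_support
    · exact ih hp.of_cons hw hv hy

lemma aux_mk_eq_iff {C : Set (Sym2 V)} {u v : V} :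
    Quotient.mk (contractSetoid C) u = Quotient.mk (contractSetoid C) v ↔
      (fromEdgeSet C).Reachable u v :=
  Quotient.eq

lemma aux_finite {C : Set (Sym2 V)} (hC : C.Finite)
    (hQ : Finite (Quotient (contractSetoid C))) : Finite V := by
  classical
  have hsupp : ({x | ∃ y, (fromEdgeSet C).Adj x y} : Set V).Finite := by
    refine Set.Finite.subset (hC.biUnion (t := fun s => {x | x ∈ s}) ?_) ?_
    · intro s _
      induction s with
      | _ a b =>
        show ({x | x ∈ s(a, b)} : Set V).Finite
        have : {x | x ∈ s(a, b)} = {a, b} := by ext x; simp [Sym2.mem_iff]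
        rw [this]; exact (Set.finite_singleton b).insert a
    · rintro x ⟨y, hxy⟩
      rw [fromEdgeSet_adj] at hxy
      exact Set.mem_biUnion hxy.1 (Sym2.mem_mk_left x y)
  have hfib : ∀ c : Quotient (contractSetoid C),
      ({u | Quotient.mk (contractSetoid C) u = c} : Set V).Finite := by
    intro c
    refine Set.Finite.subset (hsupp.insert c.out) ?_
    intro u hu
    by_cases huc : u = c.out
    · exact Set.mem_insert_iff.mpr (Or.inl huc)
    · refine Set.mem_insert_iff.mpr (Or.inr ?_)
      have hr : (fromEdgeSet C).Reachable u c.out := by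
        rw [← aux_mk_eq_iff (C := C)]
        rw [hu, Quotient.out_eq]
      obtain ⟨p⟩ := hr
      cases p with
      | nil => exact absurd rfl huc
      | cons h q => exact ⟨_, h⟩
  rw [← Set.finite_univ_iff]
  have : (Set.univ : Set V) = ⋃ c : Quotient (contractSetoid C),
      {u | Quotient.mk (contractSetoid C) u = c} := by
    ext u; simp
  rw [this]
  exact Set.finite_iUnion hfib

/-- If `(G, k)` is a yes-instance of Path Contraction, then `G` contains no subtree
(subgraph that is a tree) with more than `k + 2` leaves. -/
theorem stmt_5 (G : SimpleGraph V) (k : ℕ) (h : PCYes G k) :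
    ∀ T : G.Subgraph, T.coe.IsTree →
      {w : T.verts | (T.coe.neighborSet w).ncard = 1}.ncard ≤ k + 2 := by
  classical
  obtain ⟨C, hCE, hCk, n, ⟨e⟩⟩ := h
  intro T hT
  set Cs : Set (Sym2 V) := ↑C with hCs
  haveI hQfin : Finite (Quotient (contractSetoid Cs)) := Finite.of_equiv _ e.toEquiv.symm
  haveI : Finite V := aux_finite (hCs ▸ C.finite_toSet) hQfin
  haveI : Fintype V := Fintype.ofFinite V
  haveI : Fintype T.verts := Fintype.ofFinite _
  set φ : V → ℕ := fun v => ((e (Quotient.mk (contractSetoid Cs) v)) : Fin n).val with hφ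
  have gInj : Function.Injective (fun c : Quotient (contractSetoid Cs) => (e c : Fin n).val) :=
    fun a b hab => e.toEquiv.injective (Fin.val_injective hab)
  have lip : ∀ {u v : V}, G.Adj u v → φ u = φ v ∨ φ u + 1 = φ v ∨ φ v + 1 = φ u := by
    intro u v huv
    by_cases hq : Quotient.mk (contractSetoid Cs) u = Quotient.mk (contractSetoid Cs) v
    · left; simp only [hφ]; rw [hq]
    · right
      have hadj : (contract G Cs).Adj (Quotient.mk (contractSetoid Cs) u)
          (Quotient.mk (contractSetoid Cs) v) := ⟨hq, u, v, rfl, rfl, huv⟩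
      have h2 := e.map_adj_iff.mpr hadj
      rw [pathGraph_adj] at h2
      simpa [hφ] using h2
  -- leaf finset
  set Lf : Finset T.verts := Finset.univ.filter (fun w => (T.coe.neighborSet w).ncard = 1)
    with hLf
  have hLset : {w : T.verts | (T.coe.neighborSet w).ncard = 1} = ↑Lf := by
    ext w; simp [hLf]
  rw [hLset, Set.ncard_coe_finset]
  set Qt : Finset (Quotient (contractSetoid Cs)) :=
    Finset.univ.image (fun w : T.verts => Quotient.mk (contractSetoid Cs) ↑w) with hQt
  set A : Finset ℕ := Finset.univ.image (fun w : T.verts => φ ↑w) with hA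
  have hAQ : A = Qt.image (fun c => (e c : Fin n).val) := by
    rw [hA, hQt, Finset.image_image]; rfl
  have hAcard : A.card = Qt.card := by rw [hAQ, Finset.card_image_of_injective _ gInj]
  -- the injection counting
  have hreach : ∀ v : V,
      (fromEdgeSet Cs).Reachable v (Quotient.mk (contractSetoid Cs) v).out := by
    intro v
    rw [← aux_mk_eq_iff (C := Cs)]
    exact (Quotient.out_eq _).symm
  have hnext : ∀ v : V, v ≠ (Quotient.mk (contractSetoid Cs) v).out →
      ∃ x, (fromEdgeSet Cs).Adj v x ∧
        (fromEdgeSet Cs).dist x (Quotient.mk (contractSetoid Cs) v).out + 1 =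
          (fromEdgeSet Cs).dist v (Quotient.mk (contractSetoid Cs) v).out :=
    fun v hv => aux_exists_next _ ((hreach v).symm).symm hv
  choose! nxt hnxt_adj hnxt_dist using hnext
  have hmknxt : ∀ v : V, v ≠ (Quotient.mk (contractSetoid Cs) v).out →
      Quotient.mk (contractSetoid Cs) (nxt v) = Quotient.mk (contractSetoid Cs) v :=
    fun v hv => (aux_mk_eq_iff (C := Cs)).mpr ((hnxt_adj v hv).reachable).symm
  set f : V → Quotient (contractSetoid Cs) ⊕ Sym2 V := fun v =>
    if v = (Quotient.mk (contractSetoid Cs) v).out then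
      Sum.inl (Quotient.mk (contractSetoid Cs) v)
    else Sum.inr s(v, nxt v) with hf
  have finj : Function.Injective f := by
    intro a b hab
    simp only [hf] at hab
    by_cases h1 : a = (Quotient.mk (contractSetoid Cs) a).out <;>
      by_cases h2 : b = (Quotient.mk (contractSetoid Cs) b).out
    · rw [if_pos h1, if_pos h2, Sum.inl.injEq] at hab
      rw [h1, h2, hab]
    · rw [if_pos h1, if_neg h2] at hab; simp at hab
    · rw [if_neg h1, if_pos h2] at hab; simp at hab
    · rw [if_neg h1, if_neg h2, Sum.inr.injEq, Sym2.eq_iff] at hab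
      rcases hab with ⟨hab, -⟩ | ⟨hab1, hab2⟩
      · exact hab
      · exfalso
        have hq : Quotient.mk (contractSetoid Cs) a = Quotient.mk (contractSetoid Cs) b := by
          rw [hab1, hmknxt b h2]
        have d1 := hnxt_dist a h1
        have d2 := hnxt_dist b h2
        rw [hab2] at d1
        rw [← hab1] at d2
        rw [← hq] at d2
        omega
  have hcount : Fintype.card T.verts ≤ Qt.card + k := by
    have hmaps : ∀ w : T.verts, w ∈ (Finset.univ : Finset T.verts) →
        f ↑w ∈ Qt.image Sum.inl ∪ C.image Sum.inr := by
      intro w _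
      by_cases hw : (w : V) = (Quotient.mk (contractSetoid Cs) ↑w).out
      · rw [hf]
        simp only [if_pos hw]
        exact Finset.mem_union_left _
          (Finset.mem_image_of_mem _ (Finset.mem_image_of_mem _ (Finset.mem_univ w)))
      · rw [hf]
        simp only [if_neg hw]
        refine Finset.mem_union_right _ (Finset.mem_image_of_mem _ ?_)
        have := hnxt_adj _ hw
        rw [fromEdgeSet_adj] at this
        exact this.1
    have hinj : Set.InjOn (fun w : T.verts => f ↑w) ↑(Finset.univ : Finset T.verts) :=
      fun a _ b _ hab => Subtype.ext (finj hab)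
    have hcard := Finset.card_le_card_of_injOn _ hmaps hinj
    calc Fintype.card T.verts = (Finset.univ : Finset T.verts).card := Finset.card_univ.symm
      _ ≤ (Qt.image Sum.inl ∪ C.image Sum.inr).card := hcard
      _ ≤ (Qt.image Sum.inl).card + (C.image Sum.inr).card := Finset.card_union_le _ _
      _ ≤ Qt.card + k := add_le_add Finset.card_image_le
          (le_trans Finset.card_image_le hCk)
  -- path between extremes
  haveI hne : Nonempty T.verts := hT.isConnected.nonempty
  obtain ⟨x₀, -, hx₀⟩ := Finset.exists_min_image (Finset.univ : Finset T.verts)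
    (fun w => φ ↑w) ⟨Classical.arbitrary _, Finset.mem_univ _⟩
  obtain ⟨y₀, -, hy₀⟩ := Finset.exists_max_image (Finset.univ : Finset T.verts)
    (fun w => φ ↑w) ⟨Classical.arbitrary _, Finset.mem_univ _⟩
  obtain ⟨w0⟩ := hT.isConnected.preconnected x₀ y₀
  set p : T.coe.Walk x₀ y₀ := ↑w0.toPath with hpdef
  have hp : p.IsPath := w0.toPath.prop
  set P : Finset T.verts := p.support.toFinset with hP
  have lip' : ∀ {a b : T.verts}, T.coe.Adj a b →
      φ ↑a = φ ↑b ∨ φ ↑a + 1 = φ ↑b ∨ φ ↑b + 1 = φ ↑a := by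
    intro a b hab
    exact lip (T.adj_sub hab)
  have hAP : A ⊆ P.image (fun w : T.verts => φ ↑w) := by
    intro j hj
    rw [hA, Finset.mem_image] at hj
    obtain ⟨w, -, hw⟩ := hj
    obtain ⟨z, hz, hzj⟩ := aux_walk_ivt (fun w : T.verts => φ ↑w) lip' p j
      (le_trans (hx₀ w (Finset.mem_univ w)) (le_of_eq hw))
      (hw ▸ hy₀ w (Finset.mem_univ w))
    rw [Finset.mem_image]
    exact ⟨z, List.mem_toFinset.mpr hz, hzj⟩
  have hAcard_le : A.card ≤ P.card :=
    le_trans (Finset.card_le_card hAP) Finset.card_image_le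
  have hLfP : Lf ⊆ (Lf \ P) ∪ {x₀, y₀} := by
    intro w hw
    by_cases hwP : w ∈ P
    · by_cases hwx : w = x₀
      · exact Finset.mem_union_right _ (by simp [hwx])
      by_cases hwy : w = y₀
      · exact Finset.mem_union_right _ (by simp [hwy])
      exfalso
      obtain ⟨a, b, hab, ha, hb⟩ := aux_internal p hp (List.mem_toFinset.mp hwP) hwx hwy
      have h2 : 1 < (T.coe.neighborSet w).ncard := by
        rw [Set.one_lt_ncard_iff (Set.toFinite _)]
        exact ⟨a, b, ha, hb, hab⟩
      rw [hLf, Finset.mem_filter] at hw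
      omega
    · exact Finset.mem_union_left _ (Finset.mem_sdiff.mpr ⟨hw, hwP⟩)
  have hxy2 : ({x₀, y₀} : Finset T.verts).card ≤ 2 :=
    le_trans (Finset.card_insert_le _ _) (by simp)
  have hL2 : Lf.card ≤ (Lf \ P).card + 2 :=
    calc Lf.card ≤ ((Lf \ P) ∪ {x₀, y₀}).card := Finset.card_le_card hLfP
      _ ≤ (Lf \ P).card + ({x₀, y₀} : Finset T.verts).card := Finset.card_union_le _ _
      _ ≤ (Lf \ P).card + 2 := by omega
  have hdisj : (Lf \ P).card + P.card ≤ Fintype.card T.verts := by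
    rw [Finset.card_sdiff_add_card, ← Finset.card_univ]
    exact Finset.card_le_card (Finset.subset_univ _)
  omega
end
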